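/- arXiv:0806.1652 — 2 statements merged into one kernel-verified Lean document; each statement's English description precedes it below -/
import Mathlib

section
/- For every n ≥ 1, every tuning parameter η_n > 0 and every δ with 0 < δ < 1: the equation Φ(n^{1/2}(a − η_n)) − Φ(−n^{1/2} sqrt(a² + η_n²)) = δ has a unique solution a_{n,A}* in [0, ∞), this solution is positive, the interval [θ̂_A − a_{n,A}*, θ̂_A + a_{n,A}*] has infimal coverage probability inf_{θ∈ℝ} P_{n,θ}(θ ∈ [θ̂_A − a_{n,A}*, θ̂_A + a_{n,A}*]) exactly equal to δ, and among all pairs (a, b) of nonnegative reals for which inf_{θ∈ℝ} P_{n,θ}(θ ∈ [θ̂_A − a, θ̂_A + b]) ≥ δ the length a + b is uniquely minimized at a = b = a_{n,A}*. -/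
open MeasureTheory ProbabilityTheory Filter
open scoped NNReal

/-- Standard normal cumulative distribution function Φ. -/
noncomputable def stdNormCDF (x : ℝ) : ℝ :=
  ((gaussianReal 0 1) (Set.Iic x)).toReal

/-- Soft-thresholding (LASSO) estimator with threshold η, as a function of ȳ. -/
noncomputable def softThresh (η y : ℝ) : ℝ := Real.sign y * max (|y| - η) 0

/-- Hard-thresholding estimator with threshold η, as a function of ȳ. -/
noncomputable def hardThresh (η y : ℝ) : ℝ := if η < |y| then y else 0

/-- Adaptive LASSO estimator with tuning parameter η, as a function of ȳ. -/
noncomputable def adaLasso (η y : ℝ) : ℝ := if |y| ≤ η then 0 else y - η ^ 2 / y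

/-- Coverage probability `P_{n,θ}(θ ∈ [est(ȳ) - a, est(ȳ) + b])` in the
known-variance case (σ = 1), where ȳ ~ N(θ, 1/n). -/
noncomputable def cover (n : ℕ) (est : ℝ → ℝ) (a b θ : ℝ) : ℝ :=
  ((gaussianReal θ ((n : ℝ≥0))⁻¹)
    {y : ℝ | est y - a ≤ θ ∧ θ ≤ est y + b}).toReal

open Set Topology

set_option linter.unusedSectionVars false

/-- standard normal pdf -/
noncomputable def npdf : ℝ → ℝ := gaussianPDFReal 0 1

lemma npdf_pos (x : ℝ) : 0 < npdf x := gaussianPDFReal_pos _ _ _ one_ne_zero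

lemma npdf_eq (x : ℝ) : npdf x = (Real.sqrt (2 * Real.pi))⁻¹ * Real.exp (- x ^ 2 / 2) := by
  simp [npdf, gaussianPDFReal]

lemma npdf_cont : Continuous npdf := by
  simp only [npdf, gaussianPDFReal_def]
  fun_prop

lemma npdf_integrable : Integrable npdf := integrable_gaussianPDFReal 0 1

lemma npdf_anti {x y : ℝ} (h : |x| ≤ |y|) : npdf y ≤ npdf x := by
  rw [npdf_eq, npdf_eq]
  have h2 : x ^ 2 ≤ y ^ 2 := by
    rw [← sq_abs x, ← sq_abs y]; exact pow_le_pow_left₀ (abs_nonneg _) h 2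
  have := Real.exp_le_exp.2 (by linarith : -y ^ 2 / 2 ≤ -x ^ 2 / 2)
  exact mul_le_mul_of_nonneg_left this (by positivity)

lemma npdf_lt {x y : ℝ} (h : |x| < |y|) : npdf y < npdf x := by
  rw [npdf_eq, npdf_eq]
  have h2 : x ^ 2 < y ^ 2 := by
    rw [← sq_abs x, ← sq_abs y]; exact pow_lt_pow_left₀ h (abs_nonneg _) (by norm_num)
  have := Real.exp_lt_exp.2 (by linarith : -y ^ 2 / 2 < -x ^ 2 / 2)
  exact mul_lt_mul_of_pos_left this (by positivity)

lemma npdf_le_one (x : ℝ) : npdf x ≤ 1 := by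
  rw [npdf_eq]
  have h1 : Real.exp (- x ^ 2 / 2) ≤ 1 := by
    rw [← Real.exp_zero]; exact Real.exp_le_exp.2 (by nlinarith [sq_nonneg x])
  have h2 : (Real.sqrt (2 * Real.pi))⁻¹ ≤ 1 := by
    rw [inv_le_one_iff₀]
    right
    rw [show (1:ℝ) = Real.sqrt 1 by simp]
    exact Real.sqrt_le_sqrt (by nlinarith [Real.pi_gt_three])
  calc (Real.sqrt (2 * Real.pi))⁻¹ * Real.exp (- x ^ 2 / 2)
      ≤ 1 * 1 := mul_le_mul h2 h1 (Real.exp_nonneg _) one_pos.le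
    _ = 1 := by ring

lemma Phi_eq (x : ℝ) : stdNormCDF x = ∫ t in Iic x, npdf t := by
  rw [stdNormCDF, gaussianReal_apply_eq_integral 0 one_ne_zero]
  rw [show (fun x => gaussianPDFReal 0 1 x) = npdf from rfl]
  exact ENNReal.toReal_ofReal (setIntegral_nonneg measurableSet_Iic fun t _ => (npdf_pos t).le)

lemma Phi_sub {p q : ℝ} (h : p ≤ q) :
    stdNormCDF q - stdNormCDF p = ∫ t in Ioc p q, npdf t := by
  rw [Phi_eq, Phi_eq, ← Iic_union_Ioc_eq_Iic h,
    setIntegral_union (Iic_disjoint_Ioc le_rfl) measurableSet_Ioc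
      npdf_integrable.integrableOn npdf_integrable.integrableOn]
  ring

lemma Phi_incr_le {p q M : ℝ} (hpq : p ≤ q) (hM : ∀ t ∈ Ioc p q, npdf t ≤ M) :
    stdNormCDF q - stdNormCDF p ≤ (q - p) * M := by
  rw [Phi_sub hpq]
  have hMint : IntegrableOn (fun _ : ℝ => M) (Ioc p q) := by
    exact integrableOn_const (by simp [Real.volume_Ioc]) (by simp)
  calc ∫ t in Ioc p q, npdf t ≤ ∫ _t in Ioc p q, M :=
        setIntegral_mono_on npdf_integrable.integrableOn hMint measurableSet_Ioc hM
    _ = (q - p) * M := by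
        rw [setIntegral_const, Real.volume_real_Ioc_of_le hpq, smul_eq_mul]

lemma Phi_incr_ge {p q M : ℝ} (hpq : p ≤ q) (hM : ∀ t ∈ Ioc p q, M ≤ npdf t) :
    (q - p) * M ≤ stdNormCDF q - stdNormCDF p := by
  rw [Phi_sub hpq]
  have hMint : IntegrableOn (fun _ : ℝ => M) (Ioc p q) := by
    exact integrableOn_const (by simp [Real.volume_Ioc]) (by simp)
  calc (q - p) * M = ∫ _t in Ioc p q, M := by
        rw [setIntegral_const, Real.volume_real_Ioc_of_le hpq, smul_eq_mul]
    _ ≤ ∫ t in Ioc p q, npdf t :=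
        setIntegral_mono_on hMint npdf_integrable.integrableOn measurableSet_Ioc hM

lemma Phi_mono : Monotone stdNormCDF := by
  intro p q h
  have := Phi_incr_ge h (M := 0) (fun t _ => (npdf_pos t).le)
  simp at this; linarith

lemma Phi_strictMono : StrictMono stdNormCDF := by
  intro p q h
  have hm : ∀ t ∈ Ioc p q, npdf (max |p| |q|) ≤ npdf t := by
    intro t ht
    apply npdf_anti
    rw [abs_of_nonneg (le_trans (abs_nonneg p) (le_max_left _ _)), abs_le]
    constructor
    · calc -(max |p| |q|) ≤ -|p| := by simp
        _ ≤ p := neg_abs_le p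
        _ ≤ t := ht.1.le
    · calc t ≤ q := ht.2
        _ ≤ |q| := le_abs_self q
        _ ≤ max |p| |q| := le_max_right _ _
  have := Phi_incr_ge h.le hm
  nlinarith [npdf_pos (max |p| |q|)]

lemma Phi_cont : Continuous stdNormCDF := by
  have : LipschitzWith 1 stdNormCDF := by
    apply LipschitzWith.of_dist_le_mul
    intro x y
    rw [Real.dist_eq, Real.dist_eq]
    rcases le_total x y with h | h
    · have h1 := Phi_incr_le h (M := 1) (fun t _ => npdf_le_one t)
      have h2 := Phi_mono h
      rw [abs_of_nonpos (by linarith), abs_of_nonpos (by linarith)]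
      push_cast; linarith
    · have h1 := Phi_incr_le h (M := 1) (fun t _ => npdf_le_one t)
      have h2 := Phi_mono h
      rw [abs_of_nonneg (by linarith), abs_of_nonneg (by linarith)]
      push_cast; linarith
  exact this.continuous

lemma npdf_total : ∫ t, npdf t = 1 := integral_gaussianPDFReal_eq_one 0 one_ne_zero

lemma Phi_neg (x : ℝ) : stdNormCDF (-x) = 1 - stdNormCDF x := by
  have heven : ∀ t : ℝ, npdf (-t) = npdf t := by
    intro t; rw [npdf_eq, npdf_eq]; ring_nf
  have h1 : stdNormCDF (-x) = ∫ t in Ioi x, npdf t := by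
    have h0 := integral_comp_neg_Iic (-x) npdf
    simp_rw [heven, neg_neg] at h0
    rw [Phi_eq, h0]
  have h2 : (∫ t in Iic x, npdf t) + ∫ t in Ioi x, npdf t = 1 := by
    rw [← npdf_total, ← setIntegral_union (Iic_disjoint_Ioi le_rfl) measurableSet_Ioi
      npdf_integrable.integrableOn npdf_integrable.integrableOn, Iic_union_Ioi]
    simp
  rw [h1, Phi_eq]; linarith

lemma Phi_tendsto_atTop : Tendsto stdNormCDF atTop (𝓝 1) := by
  have h := tendsto_measure_Iic_atTop (gaussianReal 0 1)
  rw [measure_univ] at h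
  have := (ENNReal.tendsto_toReal (by norm_num : (1 : ENNReal) ≠ ⊤)).comp h
  simp [Function.comp_def] at this
  exact this

lemma Phi_hasDeriv (x : ℝ) : HasDerivAt stdNormCDF (npdf x) x := by
  have key : ∀ y : ℝ, stdNormCDF y = stdNormCDF 0 + ∫ t in (0:ℝ)..y, npdf t := by
    intro y
    rcases le_total 0 y with h | h
    · rw [intervalIntegral.integral_of_le h, ← Phi_sub h]; ring
    · rw [intervalIntegral.integral_symm, intervalIntegral.integral_of_le h, ← Phi_sub h]; ring
  have hd : HasDerivAt (fun y => stdNormCDF 0 + ∫ t in (0:ℝ)..y, npdf t) (npdf x) x := by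
    apply HasDerivAt.const_add
    exact intervalIntegral.integral_hasDerivAt_right
      npdf_integrable.intervalIntegrable
      (npdf_cont.stronglyMeasurable.stronglyMeasurableAtFilter)
      npdf_cont.continuousAt
  exact hd.congr_of_eventuallyEq (Filter.Eventually.of_forall key)

/-! Algebraic helpers -/

noncomputable def dfun (η z : ℝ) : ℝ := (Real.sqrt (z^2 + 4*η^2) - z)/2
noncomputable def Gp (η z : ℝ) : ℝ := (z + Real.sqrt (z^2 + 4*η^2))/2
noncomputable def Gm (η z : ℝ) : ℝ := (z - Real.sqrt (z^2 + 4*η^2))/2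

section eta
variable {η : ℝ} (hη : 0 < η)

include hη in
lemma sq4_pos (z : ℝ) : 0 < z^2 + 4*η^2 := by nlinarith [sq_nonneg z]

include hη in
lemma sqrt_gt_abs (z : ℝ) : |z| < Real.sqrt (z^2 + 4*η^2) := by
  have h1 : |z| = Real.sqrt (z^2) := (Real.sqrt_sq_eq_abs z).symm
  rw [h1]
  exact Real.sqrt_lt_sqrt (sq_nonneg z) (by nlinarith)

include hη in
lemma sqrt_gt_self (z : ℝ) : z < Real.sqrt (z^2 + 4*η^2) :=
  lt_of_le_of_lt (le_abs_self z) (sqrt_gt_abs hη z)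

include hη in
lemma sqrt_gt_neg (z : ℝ) : -z < Real.sqrt (z^2 + 4*η^2) :=
  lt_of_le_of_lt (neg_le_abs z) (sqrt_gt_abs hη z)

include hη in
lemma dfun_pos (z : ℝ) : 0 < dfun η z := by
  have := sqrt_gt_self hη z; unfold dfun; linarith

include hη in
lemma Gp_pos (z : ℝ) : 0 < Gp η z := by
  have := sqrt_gt_neg hη z; unfold Gp; linarith

include hη in
lemma Gm_neg' (z : ℝ) : Gm η z < 0 := by
  have := sqrt_gt_self hη z; unfold Gm; linarith

lemma Gp_eq (z : ℝ) : Gp η z = z + dfun η z := by unfold Gp dfun; ring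

lemma Gm_eq (z : ℝ) : Gm η z = z - dfun η (-z) := by
  unfold Gm dfun; rw [neg_sq]; ring

lemma Gm_eq_neg_Gp (z : ℝ) : Gm η z = -(Gp η (-z)) := by
  unfold Gm Gp; rw [neg_sq]; ring

include hη in
lemma dfun_zero : dfun η 0 = η := by
  unfold dfun
  rw [show (0:ℝ)^2 + 4*η^2 = (2*η)^2 by ring, Real.sqrt_sq (by linarith)]
  ring

omit hη in
lemma dfun_two (a : ℝ) : dfun η (2*a) = Real.sqrt (a^2+η^2) - a := by
  unfold dfun
  rw [show (2*a)^2 + 4*η^2 = (2:ℝ)^2 * (a^2 + η^2) by ring, Real.sqrt_mul (by norm_num),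
    Real.sqrt_sq (by norm_num : (0:ℝ) ≤ 2)]
  ring

include hη in
lemma sqrt_lip {z1 z2 : ℝ} (h : z1 ≤ z2) :
    Real.sqrt (z2^2 + 4*η^2) - Real.sqrt (z1^2 + 4*η^2) ≤ z2 - z1 ∧
    Real.sqrt (z1^2 + 4*η^2) - Real.sqrt (z2^2 + 4*η^2) ≤ z2 - z1 := by
  set S1 := Real.sqrt (z1^2 + 4*η^2) with hS1def
  set S2 := Real.sqrt (z2^2 + 4*η^2) with hS2def
  have hS1 : S1^2 = z1^2 + 4*η^2 := Real.sq_sqrt (sq4_pos hη z1).le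
  have hS2 : S2^2 = z2^2 + 4*η^2 := Real.sq_sqrt (sq4_pos hη z2).le
  have h1 : -z1 < S1 := sqrt_gt_neg hη z1
  have h2 : z1 < S1 := sqrt_gt_self hη z1
  have h3 : -z2 < S2 := sqrt_gt_neg hη z2
  have h4 : z2 < S2 := sqrt_gt_self hη z2
  have key : (S2 - S1) * (S2 + S1) = (z2 - z1) * (z2 + z1) := by nlinarith
  constructor
  · nlinarith
  · nlinarith

include hη in
lemma dfun_anti {z1 z2 : ℝ} (h : z1 ≤ z2) : dfun η z2 ≤ dfun η z1 := by
  have := (sqrt_lip hη h).1; unfold dfun; linarith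

include hη in
lemma Gp_mono {z1 z2 : ℝ} (h : z1 ≤ z2) : Gp η z1 ≤ Gp η z2 := by
  have := (sqrt_lip hη h).2; unfold Gp; linarith

include hη in
lemma Gm_mono {z1 z2 : ℝ} (h : z1 ≤ z2) : Gm η z1 ≤ Gm η z2 := by
  have := (sqrt_lip hη h).1; unfold Gm; linarith

omit hη in
lemma dfun_sub_le {h a : ℝ} (hh : 0 ≤ h) (ha : 0 ≤ a) :
    dfun η h - dfun η (h + 2*a) ≤ 2*a := by
  have hs : Real.sqrt (h^2 + 4*η^2) ≤ Real.sqrt ((h+2*a)^2 + 4*η^2) :=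
    Real.sqrt_le_sqrt (by nlinarith)
  unfold dfun; linarith

lemma dfun_cont : Continuous (dfun η) := by
  unfold dfun; fun_prop

include hη in
lemma hasDerivAt_dfun (z : ℝ) :
    HasDerivAt (dfun η) ((z / Real.sqrt (z^2 + 4*η^2) - 1)/2) z := by
  have h1 : HasDerivAt (fun z : ℝ => z^2 + 4*η^2) (2*z) z := by
    simpa using ((hasDerivAt_pow 2 z).add_const (4*η^2))
  have h2 : HasDerivAt (fun z : ℝ => Real.sqrt (z^2 + 4*η^2))
      (1 / (2 * Real.sqrt (z^2 + 4*η^2)) * (2*z)) z :=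
    (Real.hasDerivAt_sqrt (ne_of_gt (sq4_pos hη z))).comp z h1
  have h3 := (h2.sub (hasDerivAt_id z)).div_const 2
  convert h3 using 1
  · rfl
  · rfl
  · rfl
  have hs : Real.sqrt (z^2 + 4*η^2) ≠ 0 := ne_of_gt (Real.sqrt_pos.2 (sq4_pos hη z))
  field_simp

include hη in
lemma ratio_mono {z1 z2 : ℝ} (h0 : 0 ≤ z1) (h : z1 ≤ z2) :
    z1 / Real.sqrt (z1^2 + 4*η^2) ≤ z2 / Real.sqrt (z2^2 + 4*η^2) := by
  have hS1 : 0 < Real.sqrt (z1^2 + 4*η^2) := Real.sqrt_pos.2 (sq4_pos hη z1)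
  have hS2 : 0 < Real.sqrt (z2^2 + 4*η^2) := Real.sqrt_pos.2 (sq4_pos hη z2)
  rw [div_le_div_iff₀ hS1 hS2]
  have e1 : z1 * Real.sqrt (z2^2 + 4*η^2) = Real.sqrt (z1^2 * (z2^2 + 4*η^2)) := by
    rw [Real.sqrt_mul (sq_nonneg z1), Real.sqrt_sq h0]
  have e2 : z2 * Real.sqrt (z1^2 + 4*η^2) = Real.sqrt (z2^2 * (z1^2 + 4*η^2)) := by
    rw [Real.sqrt_mul (sq_nonneg z2), Real.sqrt_sq (le_trans h0 h)]
  rw [e1, e2]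
  have hz12 : z1^2 ≤ z2^2 := by nlinarith
  exact Real.sqrt_le_sqrt (by nlinarith [sq_nonneg η])

include hη in
lemma ratio_lt_one (z : ℝ) : z / Real.sqrt (z^2 + 4*η^2) < 1 := by
  have hS : 0 < Real.sqrt (z^2 + 4*η^2) := Real.sqrt_pos.2 (sq4_pos hη z)
  rw [div_lt_one hS]
  exact sqrt_gt_self hη z

end eta

/-! adaLasso preimage -/

noncomputable def Ucut (η u : ℝ) : ℝ := if 0 ≤ u then Gp η u else Gm η u
noncomputable def Lcut (η l : ℝ) : ℝ := if 0 < l then Gp η l else Gm η l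

section eta2
variable {η : ℝ} (hη : 0 < η)

include hη

lemma GpGm_add (u : ℝ) : Gp η u + Gm η u = u := by unfold Gp Gm; ring

lemma GpGm_mul (u : ℝ) : Gp η u * Gm η u = -η^2 := by
  have hS := Real.sq_sqrt (sq4_pos hη u).le
  unfold Gp Gm; nlinarith

lemma quad_factor (u y : ℝ) : y^2 - u*y - η^2 = (y - Gp η u) * (y - Gm η u) := by
  have h1 := GpGm_add hη u
  have h2 := GpGm_mul hη u
  have h3 : (y - Gp η u) * (y - Gm η u)
      = y^2 - (Gp η u + Gm η u)*y + Gp η u * Gm η u := by ring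
  rw [h3, h1, h2]; ring

lemma Gp_ge_eta {u : ℝ} (hu : 0 ≤ u) : η ≤ Gp η u := by
  have hS := Real.sq_sqrt (sq4_pos hη u).le
  have hS0 := Real.sqrt_pos.2 (sq4_pos hη u)
  unfold Gp; nlinarith

lemma Gm_lt_eta {u : ℝ} (hu : u < 0) : Gm η u < -η := by
  have key : u + 2*η < Real.sqrt (u^2 + 4*η^2) :=
    Real.lt_sqrt_of_sq_lt (by nlinarith)
  unfold Gm; linarith

lemma ada_le_iff (u y : ℝ) : adaLasso η y ≤ u ↔ y ≤ Ucut η u := by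
  unfold adaLasso Ucut
  by_cases hu : 0 ≤ u
  · rw [if_pos hu]
    constructor
    · intro hle
      by_contra hgt
      push_neg at hgt
      have hy : η < y := lt_of_le_of_lt (Gp_ge_eta hη hu) hgt
      have hy0 : (0:ℝ) < y := lt_trans hη hy
      rw [if_neg (by rw [abs_of_pos hy0]; linarith)] at hle
      have hq : 0 < (y - Gp η u) * (y - Gm η u) := by
        have hneg := Gm_neg' hη u
        have h1 : 0 < y - Gp η u := by linarith
        have h2 : 0 < y - Gm η u := by linarith
        positivity
      rw [← quad_factor hη] at hq
      have h3 : η^2 / y * y = η^2 := div_mul_cancel₀ _ (ne_of_gt hy0)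
      have h4 := mul_le_mul_of_nonneg_right hle hy0.le
      nlinarith
    · intro hle
      by_cases hyeta : |y| ≤ η
      · rw [if_pos hyeta]; exact hu
      · rw [if_neg hyeta]
        push_neg at hyeta
        rcases lt_or_ge 0 y with hy0 | hy0
        · have hq : (y - Gp η u) * (y - Gm η u) ≤ 0 := by
            have hneg := Gm_neg' hη u
            apply mul_nonpos_of_nonpos_of_nonneg <;> linarith
          rw [← quad_factor hη] at hq
          have h3 : η^2 / y * y = η^2 := div_mul_cancel₀ _ (ne_of_gt hy0)
          by_contra hc
          push_neg at hc
          have h5 := mul_lt_mul_of_pos_right hc hy0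
          nlinarith
        · have hy : y < -η := by
            rcases abs_cases y with ⟨h1, _⟩ | ⟨h1, _⟩ <;> linarith
          have hy0' : y < 0 := by linarith
          have h3 : η^2 / y * y = η^2 := div_mul_cancel₀ _ (ne_of_lt hy0')
          -- A y < 0 ≤ u
          by_contra hc
          push_neg at hc
          have h5 := mul_lt_mul_of_neg_right hc hy0'
          nlinarith
  · rw [if_neg hu]
    push_neg at hu
    have hGm := Gm_lt_eta hη hu
    constructor
    · intro hle
      have hyeta : ¬ |y| ≤ η := by
        intro hc
        rw [if_pos hc] at hle; linarith
      rw [if_neg hyeta] at hle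
      push_neg at hyeta
      have hy : y < -η := by
        rcases lt_or_ge 0 y with hy0 | hy0
        · exfalso
          have hy' : η < y := by rwa [abs_of_pos hy0] at hyeta
          have h3 : η^2 / y * y = η^2 := div_mul_cancel₀ _ (ne_of_gt hy0)
          have h4 := mul_le_mul_of_nonneg_right hle hy0.le
          nlinarith
        · rcases abs_cases y with ⟨h1, _⟩ | ⟨h1, _⟩ <;> linarith
      have hy0' : y < 0 := by linarith
      have h3 : η^2 / y * y = η^2 := div_mul_cancel₀ _ (ne_of_lt hy0')
      have h4 := mul_le_mul_of_nonpos_right hle hy0'.le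
      -- u * y ≤ y² - η²  ⇒ (y-Gp)(y-Gm) ≥ 0
      have hq : 0 ≤ (y - Gp η u) * (y - Gm η u) := by
        rw [← quad_factor hη]; nlinarith
      have h1 : y - Gp η u < 0 := by have := Gp_pos hη u; linarith
      by_contra hgt
      push_neg at hgt
      have h2 : 0 < y - Gm η u := by linarith
      nlinarith
    · intro hle
      have hy : y < -η := lt_of_le_of_lt hle hGm
      have hy0' : y < 0 := by linarith
      rw [if_neg (by rw [abs_of_neg hy0']; linarith)]
      have hq : 0 ≤ (y - Gp η u) * (y - Gm η u) := by
        have h1 : y - Gp η u < 0 := by have := Gp_pos hη u; linarith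
        have h2 : y - Gm η u ≤ 0 := by linarith
        nlinarith
      rw [← quad_factor hη] at hq
      have h3 : η^2 / y * y = η^2 := div_mul_cancel₀ _ (ne_of_lt hy0')
      by_contra hc
      push_neg at hc
      have h5 := mul_lt_mul_of_neg_right hc hy0'
      nlinarith

lemma ada_odd (y : ℝ) : adaLasso η (-y) = -(adaLasso η y) := by
  unfold adaLasso
  rcases le_or_gt (|y|) η with h | h
  · rw [if_pos (by rwa [abs_neg]), if_pos h, neg_zero]
  · have hy0 : y ≠ 0 := by
      intro h0; rw [h0, abs_zero] at h; linarith
    rw [if_neg (by rw [abs_neg]; linarith), if_neg (by linarith)]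
    rw [div_neg]
    ring

omit hη in
lemma Lcut_eq_neg_Ucut (l : ℝ) : Lcut η l = -(Ucut η (-l)) := by
  unfold Lcut Ucut
  by_cases hl : 0 < l
  · rw [if_pos hl, if_neg (by linarith), Gm_eq_neg_Gp, neg_neg, neg_neg]
  · push_neg at hl
    rw [if_neg (by linarith), if_pos (by linarith), Gm_eq_neg_Gp]

lemma le_ada_iff (l y : ℝ) : l ≤ adaLasso η y ↔ Lcut η l ≤ y := by
  rw [show (l ≤ adaLasso η y) ↔ (adaLasso η (-y) ≤ -l) by
      rw [ada_odd hη]; constructor <;> intro h <;> linarith,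
    ada_le_iff hη, Lcut_eq_neg_Ucut]
  constructor <;> intro h <;> linarith

lemma cover_set_eq (a b θ : ℝ) :
    {y : ℝ | adaLasso η y - a ≤ θ ∧ θ ≤ adaLasso η y + b}
      = Icc (Lcut η (θ - b)) (Ucut η (θ + a)) := by
  ext y
  simp only [mem_setOf_eq, mem_Icc]
  constructor
  · rintro ⟨h1, h2⟩
    exact ⟨(le_ada_iff hη (θ - b) y).1 (by linarith), (ada_le_iff hη (θ + a) y).1 (by linarith)⟩
  · rintro ⟨h1, h2⟩
    have g1 := (le_ada_iff hη (θ - b) y).2 h1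
    have g2 := (ada_le_iff hη (θ + a) y).2 h2
    constructor <;> linarith

lemma Lcut_le_Ucut {l u : ℝ} (h : l ≤ u) : Lcut η l ≤ Ucut η u := by
  unfold Lcut Ucut
  by_cases hl : 0 < l
  · rw [if_pos hl, if_pos (by linarith)]
    exact Gp_mono hη h
  · push_neg at hl
    rw [if_neg (by linarith)]
    by_cases hu : 0 ≤ u
    · rw [if_pos hu]
      exact le_of_lt (lt_trans (Gm_neg' hη l) (Gp_pos hη u))
    · rw [if_neg hu]
      exact Gm_mono hη h

end eta2

/-! cover computation -/

lemma gauss_Icc {n : ℕ} (hn : 1 ≤ n) (θ L U : ℝ) :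
    (gaussianReal θ ((n : ℝ≥0))⁻¹) (Icc L U)
      = (gaussianReal 0 1) (Icc (Real.sqrt n * (L - θ)) (Real.sqrt n * (U - θ))) := by
  set c : ℝ := Real.sqrt n with hcdef
  have hn' : (0:ℝ) < n := by exact_mod_cast Nat.lt_of_lt_of_le Nat.zero_lt_one hn
  have hc : 0 < c := Real.sqrt_pos.2 hn'
  have hc2 : c^2 = (n : ℝ) := Real.sq_sqrt (Nat.cast_nonneg n)
  have hmap1 : Measure.map (fun x => c * x) (gaussianReal θ ((n : ℝ≥0))⁻¹)
      = gaussianReal (c*θ) 1 := by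
    rw [show (fun x => c * x) = (c * ·) from rfl, gaussianReal_map_const_mul]
    congr 1
    refine NNReal.coe_injective ?_
    push_cast
    rw [hc2]
    field_simp
  have hmap2 : Measure.map (· + -(c*θ)) (gaussianReal (c*θ) 1)
      = gaussianReal 0 1 := by
    rw [gaussianReal_map_add_const, add_neg_cancel]
  have hcomp : Measure.map (fun x => c * x + -(c*θ)) (gaussianReal θ ((n : ℝ≥0))⁻¹)
      = gaussianReal 0 1 := by
    rw [← hmap2, ← hmap1, Measure.map_map (by fun_prop) (by fun_prop)]
    rfl
  rw [← hcomp, Measure.map_apply (by fun_prop) measurableSet_Icc]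
  congr 1
  ext x
  simp only [mem_preimage, mem_Icc]
  rw [show c*x + -(c*θ) = c*(x-θ) by ring, mul_le_mul_iff_right₀ hc, mul_le_mul_iff_right₀ hc,
    sub_le_sub_iff_right, sub_le_sub_iff_right]

lemma gauss_Icc_toReal {p q : ℝ} (h : p ≤ q) :
    ((gaussianReal 0 1) (Icc p q)).toReal = stdNormCDF q - stdNormCDF p := by
  rw [gaussianReal_apply_eq_integral 0 one_ne_zero,
    show (fun x => gaussianPDFReal 0 1 x) = npdf from rfl,
    ENNReal.toReal_ofReal (setIntegral_nonneg measurableSet_Icc fun t _ => (npdf_pos t).le),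
    integral_Icc_eq_integral_Ioc, ← Phi_sub h]

lemma cover_eq' {n : ℕ} (hn : 1 ≤ n) {η : ℝ} (hη : 0 < η) {a b : ℝ} (ha : 0 ≤ a) (hb : 0 ≤ b)
    (θ : ℝ) :
    cover n (adaLasso η) a b θ
      = stdNormCDF (Real.sqrt n * (Ucut η (θ+a) - θ))
        - stdNormCDF (Real.sqrt n * (Lcut η (θ-b) - θ)) := by
  have hc : (0:ℝ) < Real.sqrt n := Real.sqrt_pos.2 (by exact_mod_cast hn)
  have hLU : Lcut η (θ-b) ≤ Ucut η (θ+a) := Lcut_le_Ucut hη (by linarith)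
  unfold cover
  rw [cover_set_eq hη, gauss_Icc hn, gauss_Icc_toReal]
  exact mul_le_mul_of_nonneg_left (by linarith) hc.le

/-! the boundary function fstar -/

noncomputable def fstar (n : ℕ) (η a : ℝ) : ℝ :=
  stdNormCDF (Real.sqrt n * (a - η)) -
    stdNormCDF (-(Real.sqrt n * Real.sqrt (a ^ 2 + η ^ 2)))

section fs
variable {n : ℕ} (hn : 1 ≤ n) {η : ℝ} (hη : 0 < η)

include hn hη

lemma sqrtn_pos : (0:ℝ) < Real.sqrt n := Real.sqrt_pos.2 (by exact_mod_cast hn)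

lemma fstar_eq (a : ℝ) :
    fstar n η a = stdNormCDF (Real.sqrt n * Real.sqrt (a ^ 2 + η ^ 2))
      - stdNormCDF (Real.sqrt n * (η - a)) := by
  unfold fstar
  rw [show Real.sqrt n * (a - η) = -(Real.sqrt n * (η - a)) by ring, Phi_neg, Phi_neg]
  ring

lemma fstar_zero : fstar n η 0 = 0 := by
  rw [fstar_eq hn hη]
  congr 2
  rw [show (0:ℝ)^2 + η^2 = η^2 by ring, Real.sqrt_sq hη.le]
  ring

lemma fstar_strictMonoOn : StrictMonoOn (fstar n η) (Ici 0) := by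
  intro a1 h1 a2 h2 h12
  rw [fstar_eq hn hη, fstar_eq hn hη]
  have hc := sqrtn_pos hn hη
  have hs : Real.sqrt (a1^2 + η^2) < Real.sqrt (a2^2 + η^2) := by
    apply Real.sqrt_lt_sqrt (by positivity)
    have h1' : 0 ≤ a1 := h1
    nlinarith
  have hA : stdNormCDF (Real.sqrt n * Real.sqrt (a1^2+η^2))
      < stdNormCDF (Real.sqrt n * Real.sqrt (a2^2+η^2)) :=
    Phi_strictMono (by exact mul_lt_mul_of_pos_left hs hc)
  have hB : stdNormCDF (Real.sqrt n * (η - a2)) < stdNormCDF (Real.sqrt n * (η - a1)) :=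
    Phi_strictMono (by nlinarith)
  linarith

lemma fstar_cont : Continuous (fstar n η) := by
  unfold fstar
  apply Continuous.sub
  · exact Phi_cont.comp (by fun_prop)
  · exact Phi_cont.comp (by fun_prop)

lemma fstar_ge (a : ℝ) :
    2 * stdNormCDF (Real.sqrt n * (a - η)) - 1 ≤ fstar n η a := by
  unfold fstar
  have hc := sqrtn_pos hn hη
  have h1 : a - η ≤ Real.sqrt (a^2 + η^2) := by
    rcases le_or_gt a 0 with h | h
    · have := Real.sqrt_nonneg (a^2 + η^2); linarith
    · calc a - η ≤ a := by linarith
        _ = Real.sqrt (a^2) := by rw [Real.sqrt_sq h.le]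
        _ ≤ Real.sqrt (a^2 + η^2) := Real.sqrt_le_sqrt (by nlinarith)
  have h2 : stdNormCDF (-(Real.sqrt n * Real.sqrt (a^2+η^2)))
      ≤ stdNormCDF (-(Real.sqrt n * (a - η))) := by
    apply Phi_mono
    have := mul_le_mul_of_nonneg_left h1 hc.le
    linarith
  rw [Phi_neg (Real.sqrt n * (a - η))] at h2
  linarith

lemma fstar_exists_ge {δ : ℝ} (hδ1 : δ < 1) : ∃ M : ℝ, 0 ≤ M ∧ δ ≤ fstar n η M := by
  have hc := sqrtn_pos hn hη
  have htend : Tendsto (fun a : ℝ => stdNormCDF (Real.sqrt n * (a - η))) atTop (𝓝 1) := by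
    apply Phi_tendsto_atTop.comp
    exact Tendsto.const_mul_atTop hc (tendsto_atTop_add_const_right _ _ tendsto_id)
  have h2 : Tendsto (fun a : ℝ => 2 * stdNormCDF (Real.sqrt n * (a - η)) - 1) atTop (𝓝 1) := by
    have h4 := (htend.const_mul 2).sub_const 1
    norm_num at h4
    exact h4
  have hev : ∀ᶠ a in (atTop : Filter ℝ), δ < 2 * stdNormCDF (Real.sqrt n * (a - η)) - 1 :=
    h2.eventually (eventually_gt_nhds hδ1)
  obtain ⟨M, hM1, hM2⟩ := (hev.and (eventually_ge_atTop (0:ℝ))).exists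
  exact ⟨M, hM2, le_trans hM1.le (fstar_ge hn hη M)⟩

lemma astar_exists {δ : ℝ} (hδ0 : 0 < δ) (hδ1 : δ < 1) :
    ∃ astar : ℝ, 0 < astar ∧ fstar n η astar = δ ∧
      ∀ a : ℝ, 0 ≤ a → fstar n η a = δ → a = astar := by
  obtain ⟨M, hM0, hMδ⟩ := fstar_exists_ge hn hη hδ1
  have hIVT := intermediate_value_Icc hM0 (fstar_cont hn hη).continuousOn
  have hmem : δ ∈ Icc (fstar n η 0) (fstar n η M) := by
    rw [fstar_zero hn hη]; exact ⟨hδ0.le, hMδ⟩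
  obtain ⟨astar, ⟨ha0, haM⟩, hfa⟩ := hIVT hmem
  refine ⟨astar, ?_, hfa, ?_⟩
  · rcases lt_or_eq_of_le ha0 with h | h
    · exact h
    · exfalso; rw [← h] at hfa; rw [fstar_zero hn hη] at hfa; linarith
  · intro a ha hfa'
    exact (fstar_strictMonoOn hn hη).injOn ha ha0 (by rw [hfa, hfa'])
end fs

/-! G function and its monotonicity -/

noncomputable def Gfun (c η a h : ℝ) : ℝ :=
  stdNormCDF (c * (a + dfun η (h + 2*a))) - stdNormCDF (c * (dfun η h - a))

section gmono
variable {c η a : ℝ} (hc : 0 < c) (hη : 0 < η) (ha : 0 ≤ a)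

include hη in
lemma Gfun_hasDeriv (h : ℝ) :
    HasDerivAt (Gfun c η a)
      (npdf (c * (a + dfun η (h + 2*a))) * (c * (((h+2*a) / Real.sqrt ((h+2*a)^2 + 4*η^2) - 1)/2))
       - npdf (c * (dfun η h - a)) * (c * ((h / Real.sqrt (h^2 + 4*η^2) - 1)/2))) h := by
  have hd1 : HasDerivAt (fun h : ℝ => dfun η (h + 2*a))
      (((h+2*a) / Real.sqrt ((h+2*a)^2 + 4*η^2) - 1)/2) h := by
    have := (hasDerivAt_dfun hη (h + 2*a)).comp h ((hasDerivAt_id h).add_const (2*a))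
    simpa [Function.comp_def] using this
  have hA : HasDerivAt (fun h : ℝ => c * (a + dfun η (h + 2*a)))
      (c * (((h+2*a) / Real.sqrt ((h+2*a)^2 + 4*η^2) - 1)/2)) h :=
    ((hd1.const_add a).const_mul c)
  have hB : HasDerivAt (fun h : ℝ => c * (dfun η h - a))
      (c * ((h / Real.sqrt (h^2 + 4*η^2) - 1)/2)) h :=
    (((hasDerivAt_dfun hη h).sub_const a).const_mul c)
  have h1 := (Phi_hasDeriv (c * (a + dfun η (h + 2*a)))).comp h hA
  have h2 := (Phi_hasDeriv (c * (dfun η h - a))).comp h hB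
  exact h1.sub h2

include hc hη ha in
lemma Gfun_mono : MonotoneOn (Gfun c η a) (Ici 0) := by
  apply monotoneOn_of_deriv_nonneg (convex_Ici 0)
  · exact fun x _ => ((Gfun_hasDeriv hη x).continuousAt).continuousWithinAt
  · intro x hx
    exact ((Gfun_hasDeriv hη x).differentiableAt).differentiableWithinAt
  · intro h hh
    rw [interior_Ici] at hh
    have hh0 : 0 < h := hh
    rw [(Gfun_hasDeriv hη h).deriv]
    -- notation
    set r1 : ℝ := h / Real.sqrt (h^2 + 4*η^2) with hr1
    set r2 : ℝ := (h+2*a) / Real.sqrt ((h+2*a)^2 + 4*η^2) with hr2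
    have hrm : r1 ≤ r2 := ratio_mono hη hh0.le (by linarith)
    have hr2lt : r2 < 1 := ratio_lt_one hη (h+2*a)
    have hr1pos : 0 ≤ r1 := div_nonneg hh0.le (Real.sqrt_nonneg _)
    -- pdf comparison
    have habs : |c * (dfun η h - a)| ≤ |c * (a + dfun η (h + 2*a))| := by
      have hd1 : 0 < dfun η h := dfun_pos hη h
      have hd2 : 0 < dfun η (h + 2*a) := dfun_pos hη (h + 2*a)
      have hsub : dfun η h - dfun η (h + 2*a) ≤ 2*a := dfun_sub_le hh0.le ha
      rw [abs_mul, abs_mul, abs_of_pos hc]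
      apply mul_le_mul_of_nonneg_left _ hc.le
      rw [abs_of_pos (by linarith : 0 < a + dfun η (h + 2*a)), abs_le]
      constructor <;> linarith
    have hpdf : npdf (c * (a + dfun η (h + 2*a))) ≤ npdf (c * (dfun η h - a)) :=
      npdf_anti habs
    have key : npdf (c * (a + dfun η (h + 2*a))) * ((1 - r2)/2)
        ≤ npdf (c * (dfun η h - a)) * ((1 - r1)/2) := by
      apply mul_le_mul hpdf (by linarith) (by linarith) (npdf_pos _).le
    have e1 : npdf (c * (a + dfun η (h + 2*a))) * (c * ((r2 - 1)/2))
        = - (c * (npdf (c * (a + dfun η (h + 2*a))) * ((1 - r2)/2))) := by ring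
    have e2 : npdf (c * (dfun η h - a)) * (c * ((r1 - 1)/2))
        = - (c * (npdf (c * (dfun η h - a)) * ((1 - r1)/2))) := by ring
    rw [e1, e2]
    have := mul_le_mul_of_nonneg_left key hc.le
    linarith

end gmono

/-! increment comparison -/

section incr
variable {c S t p : ℝ} (hc : 0 < c) (hS : 0 < S) (ht : 0 ≤ t)
  (hp : |p| ≤ S) (hpt : |p + t| ≤ S)

include hc hS ht hp hpt in
lemma Phi_incr_compare :
    stdNormCDF (c*(S+t)) - stdNormCDF (c*S) ≤ stdNormCDF (c*(p+t)) - stdNormCDF (c*p) := by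
  have hRHS : c*t * npdf (c*S) ≤ stdNormCDF (c*(p+t)) - stdNormCDF (c*p) := by
    have h0 := Phi_incr_ge (p := c*p) (q := c*(p+t)) (M := npdf (c*S))
      (by nlinarith) ?_
    · calc c*t * npdf (c*S) = (c*(p+t) - c*p) * npdf (c*S) := by ring
        _ ≤ _ := h0
    · intro x hx
      apply npdf_anti
      rw [abs_of_pos (by positivity : (0:ℝ) < c*S), abs_le]
      rcases abs_le.1 hp with ⟨hp1, hp2⟩
      rcases abs_le.1 hpt with ⟨hq1, hq2⟩
      constructor
      · calc -(c*S) = c * (-S) := by ring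
          _ ≤ c * p := by apply mul_le_mul_of_nonneg_left (by linarith) hc.le
          _ ≤ x := hx.1.le
      · calc x ≤ c * (p+t) := hx.2
          _ ≤ c * S := by apply mul_le_mul_of_nonneg_left (by linarith) hc.le
  have hLHS : stdNormCDF (c*(S+t)) - stdNormCDF (c*S) ≤ c*t * npdf (c*S) := by
    have h0 := Phi_incr_le (p := c*S) (q := c*(S+t)) (M := npdf (c*S))
      (by nlinarith) ?_
    · calc stdNormCDF (c*(S+t)) - stdNormCDF (c*S) ≤ (c*(S+t) - c*S) * npdf (c*S) := h0
        _ = c*t * npdf (c*S) := by ring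
    · intro x hx
      apply npdf_anti
      rw [abs_of_pos (by positivity : (0:ℝ) < c*S)]
      calc c * S ≤ x := le_of_lt hx.1
        _ ≤ |x| := le_abs_self x
  linarith

include hc hS hp hpt in
lemma Phi_incr_compare_strict (ht' : 0 < t) :
    stdNormCDF (c*(S+t)) - stdNormCDF (c*S) < stdNormCDF (c*(p+t)) - stdNormCDF (c*p) := by
  have hRHS : c*t * npdf (c*S) ≤ stdNormCDF (c*(p+t)) - stdNormCDF (c*p) := by
    have h0 := Phi_incr_ge (p := c*p) (q := c*(p+t)) (M := npdf (c*S))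
      (by nlinarith) ?_
    · calc c*t * npdf (c*S) = (c*(p+t) - c*p) * npdf (c*S) := by ring
        _ ≤ _ := h0
    · intro x hx
      apply npdf_anti
      rw [abs_of_pos (by positivity : (0:ℝ) < c*S), abs_le]
      rcases abs_le.1 hp with ⟨hp1, hp2⟩
      rcases abs_le.1 hpt with ⟨hq1, hq2⟩
      constructor
      · calc -(c*S) = c * (-S) := by ring
          _ ≤ c * p := by apply mul_le_mul_of_nonneg_left (by linarith) hc.le
          _ ≤ x := hx.1.le
      · calc x ≤ c * (p+t) := hx.2
          _ ≤ c * S := by apply mul_le_mul_of_nonneg_left (by linarith) hc.le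
  -- split LHS into two halves
  have hL1 : stdNormCDF (c*(S+t/2)) - stdNormCDF (c*S) ≤ c*t/2 * npdf (c*S) := by
    have h0 := Phi_incr_le (p := c*S) (q := c*(S+t/2)) (M := npdf (c*S))
      (by nlinarith) ?_
    · calc stdNormCDF (c*(S+t/2)) - stdNormCDF (c*S)
          ≤ (c*(S+t/2) - c*S) * npdf (c*S) := h0
        _ = c*t/2 * npdf (c*S) := by ring
    · intro x hx
      apply npdf_anti
      rw [abs_of_pos (by positivity : (0:ℝ) < c*S)]
      calc c * S ≤ x := le_of_lt hx.1
        _ ≤ |x| := le_abs_self x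
  have hL2 : stdNormCDF (c*(S+t)) - stdNormCDF (c*(S+t/2)) ≤ c*t/2 * npdf (c*(S+t/2)) := by
    have h0 := Phi_incr_le (p := c*(S+t/2)) (q := c*(S+t)) (M := npdf (c*(S+t/2)))
      (by nlinarith) ?_
    · calc stdNormCDF (c*(S+t)) - stdNormCDF (c*(S+t/2))
          ≤ (c*(S+t) - c*(S+t/2)) * npdf (c*(S+t/2)) := h0
        _ = c*t/2 * npdf (c*(S+t/2)) := by ring
    · intro x hx
      apply npdf_anti
      rw [abs_of_pos (by positivity : (0:ℝ) < c*(S+t/2))]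
      calc c * (S+t/2) ≤ x := le_of_lt hx.1
        _ ≤ |x| := le_abs_self x
  have hstrict : npdf (c*(S+t/2)) < npdf (c*S) := by
    apply npdf_lt
    rw [abs_of_pos (by positivity : (0:ℝ) < c*S),
      abs_of_pos (by positivity : (0:ℝ) < c*(S+t/2))]
    nlinarith
  have hct : 0 < c*t/2 := by positivity
  nlinarith
end incr

/-! key inequality and infimum -/

section main
variable {n : ℕ} (hn : 1 ≤ n) {η : ℝ} (hη : 0 < η)

include hη in
lemma Gp_zero : Gp η 0 = η := by
  unfold Gp
  rw [show (0:ℝ)^2 + 4*η^2 = (2*η)^2 by ring, Real.sqrt_sq (by linarith)]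
  ring

include hη in
lemma Gm_zero : Gm η 0 = -η := by
  unfold Gm
  rw [show (0:ℝ)^2 + 4*η^2 = (2*η)^2 by ring, Real.sqrt_sq (by linarith)]
  ring

lemma Gp_half (z : ℝ) : Gp η z = z/2 + Real.sqrt ((z/2)^2 + η^2) := by
  unfold Gp
  rw [show z^2 + 4*η^2 = (2:ℝ)^2 * ((z/2)^2 + η^2) by ring, Real.sqrt_mul (by norm_num),
    Real.sqrt_sq (by norm_num : (0:ℝ) ≤ 2)]
  ring

lemma Gp_cont : Continuous (Gp η) := by unfold Gp; fun_prop

lemma Gm_cont : Continuous (Gm η) := by unfold Gm; fun_prop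

include hη in
lemma eta_le_S {m : ℝ} : η ≤ Real.sqrt (m^2 + η^2) := by
  have h := Real.sqrt_le_sqrt (show η^2 ≤ m^2 + η^2 by nlinarith)
  rwa [Real.sqrt_sq hη.le] at h

lemma self_le_S {m : ℝ} (hm : 0 ≤ m) : m ≤ Real.sqrt (m^2 + η^2) := by
  have h := Real.sqrt_le_sqrt (show m^2 ≤ m^2 + η^2 by nlinarith)
  rwa [Real.sqrt_sq hm] at h

include hn hη in
lemma keyLe {x m : ℝ} (hx : 0 ≤ x) (hxm : x ≤ m) :
    stdNormCDF (Real.sqrt n * (Real.sqrt (m^2+η^2) + (m - x)))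
      - stdNormCDF (Real.sqrt n * (η - x)) ≤ fstar n η m := by
  have hc := sqrtn_pos hn hη
  set S := Real.sqrt (m^2 + η^2) with hSdef
  have hS : 0 < S := lt_of_lt_of_le hη (eta_le_S hη)
  have hmS : m ≤ S := self_le_S (le_trans hx hxm)
  have h1 : |η - m| ≤ S := by
    rw [abs_le]
    constructor
    · have := eta_le_S hη (m := m); linarith
    · have := eta_le_S hη (m := m); linarith
  have h2 : |η - x| ≤ S := by
    rw [abs_le]
    constructor
    · have := eta_le_S hη (m := m); rw [← hSdef] at *; linarith
    · have := eta_le_S hη (m := m); linarith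
  have := Phi_incr_compare hc hS (by linarith : (0:ℝ) ≤ m - x) h1
    (by rw [show η - m + (m - x) = η - x by ring]; exact h2)
  rw [fstar_eq hn hη]
  rw [show η - m + (m - x) = η - x by ring] at this
  rw [show Real.sqrt n * (S + (m-x)) = Real.sqrt n * (S + (m-x)) from rfl]
  have e : Real.sqrt n * S = Real.sqrt n * Real.sqrt (m^2+η^2) := rfl
  linarith [this]

include hn hη in
lemma keyLt {x m : ℝ} (hx : 0 ≤ x) (hxm : x < m) :
    stdNormCDF (Real.sqrt n * (Real.sqrt (m^2+η^2) + (m - x)))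
      - stdNormCDF (Real.sqrt n * (η - x)) < fstar n η m := by
  have hc := sqrtn_pos hn hη
  set S := Real.sqrt (m^2 + η^2) with hSdef
  have hS : 0 < S := lt_of_lt_of_le hη (eta_le_S hη)
  have hmS : m ≤ S := self_le_S (by linarith)
  have h1 : |η - m| ≤ S := by
    rw [abs_le]; have := eta_le_S hη (m := m)
    constructor <;> linarith
  have h2 : |η - m + (m - x)| ≤ S := by
    rw [show η - m + (m - x) = η - x by ring, abs_le]
    have := eta_le_S hη (m := m)
    constructor <;> linarith
  have := Phi_incr_compare_strict hc hS h1 h2 (by linarith : (0:ℝ) < m - x)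
  rw [show η - m + (m - x) = η - x by ring] at this
  rw [fstar_eq hn hη]
  linarith [this]

include hn hη in
lemma cover_ge {a : ℝ} (ha : 0 < a) (θ : ℝ) :
    fstar n η a ≤ cover n (adaLasso η) a a θ := by
  have hc := sqrtn_pos hn hη
  rw [cover_eq' hn hη ha.le ha.le θ]
  set c := Real.sqrt (n:ℝ) with hcdef
  have hf0 : fstar n η a = Gfun c η a 0 := by
    rw [fstar_eq hn hη, Gfun]
    rw [show (0:ℝ) + 2*a = 2*a by ring, dfun_two a, dfun_zero hη]
    congr 2 <;> ring
  have hGmono := Gfun_mono hc hη ha.le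
  by_cases h1 : 0 < θ - a
  · rw [show Ucut η (θ + a) = Gp η (θ + a) by unfold Ucut; rw [if_pos (by linarith)],
      show Lcut η (θ - a) = Gp η (θ - a) by unfold Lcut; rw [if_pos h1]]
    have e1 : c * (Gp η (θ+a) - θ) = c * (a + dfun η ((θ - a) + 2*a)) := by
      rw [Gp_eq, show (θ - a) + 2*a = θ + a by ring]; ring
    have e2 : c * (Gp η (θ-a) - θ) = c * (dfun η (θ - a) - a) := by
      rw [Gp_eq]; ring
    rw [e1, e2, hf0]
    exact hGmono (by exact le_refl (0:ℝ)) (by exact h1.le) h1.le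
  · push_neg at h1
    by_cases h2 : 0 ≤ θ + a
    · rw [show Ucut η (θ + a) = Gp η (θ + a) by unfold Ucut; rw [if_pos h2],
        show Lcut η (θ - a) = Gm η (θ - a) by unfold Lcut; rw [if_neg (by linarith)]]
      rw [fstar_eq hn hη]
      have b1 : stdNormCDF (c * Real.sqrt (a^2+η^2)) ≤ stdNormCDF (c * (Gp η (θ+a) - θ)) := by
        apply Phi_mono
        apply mul_le_mul_of_nonneg_left _ hc.le
        rw [Gp_eq]
        have := dfun_anti hη (show θ + a ≤ 2*a by linarith)
        have e3 := dfun_two (η := η) a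
        linarith
      have b2 : stdNormCDF (c * (Gm η (θ-a) - θ)) ≤ stdNormCDF (c * (η - a)) := by
        apply Phi_mono
        apply mul_le_mul_of_nonneg_left _ hc.le
        rw [Gm_eq]
        have := dfun_pos hη (-(θ - a))
        linarith
      linarith
    · push_neg at h2
      rw [show Ucut η (θ + a) = Gm η (θ + a) by unfold Ucut; rw [if_neg (by linarith)],
        show Lcut η (θ - a) = Gm η (θ - a) by unfold Lcut; rw [if_neg (by linarith)]]
      set h := -θ - a with hhdef
      have hh : 0 < h := by simp [hhdef]; linarith
      have e1 : c * (Gm η (θ+a) - θ) = -(c * (dfun η h - a)) := by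
        rw [Gm_eq, show -(θ + a) = h by rw [hhdef]; ring]; ring
      have e2 : c * (Gm η (θ-a) - θ) = -(c * (a + dfun η (h + 2*a))) := by
        rw [Gm_eq, show -(θ - a) = h + 2*a by rw [hhdef]; ring]; ring
      rw [e1, e2, Phi_neg, Phi_neg, hf0]
      have := hGmono (by exact le_refl (0:ℝ)) (le_of_lt hh : (0:ℝ) ≤ h) hh.le
      unfold Gfun at this ⊢
      linarith

lemma cover_bddBelow (n : ℕ) (est : ℝ → ℝ) (a b : ℝ) :
    BddBelow (range fun θ => cover n est a b θ) := by
  refine ⟨0, ?_⟩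
  rintro x ⟨θ, rfl⟩
  exact ENNReal.toReal_nonneg

include hn hη in
lemma inf_le_g1 {a b : ℝ} (ha : 0 ≤ a) (hb : 0 ≤ b) :
    (⨅ θ : ℝ, cover n (adaLasso η) a b θ)
      ≤ stdNormCDF (Real.sqrt n * (Gp η (a+b) - b)) - stdNormCDF (Real.sqrt n * (η - b)) := by
  have hc := sqrtn_pos hn hη
  set c := Real.sqrt (n:ℝ) with hcdef
  set F := fun θ : ℝ => stdNormCDF (c * (Gp η (θ+a) - θ)) - stdNormCDF (c * (Gp η (θ-b) - θ))
    with hFdef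
  have hFcont : Continuous F := by
    apply Continuous.sub
    · exact Phi_cont.comp (continuous_const.mul
        ((Gp_cont.comp (continuous_id.add continuous_const)).sub continuous_id))
    · exact Phi_cont.comp (continuous_const.mul
        ((Gp_cont.comp (continuous_id.sub continuous_const)).sub continuous_id))
  have hFb : F b = stdNormCDF (c * (Gp η (a+b) - b)) - stdNormCDF (c * (η - b)) := by
    simp only [hFdef]
    rw [show b + a = a + b by ring, show b - b = (0:ℝ) by ring, Gp_zero hη]
  have hev : ∀ θ ∈ Ioi b, (⨅ θ : ℝ, cover n (adaLasso η) a b θ) ≤ F θ := by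
    intro θ hθ
    have hθb : b < θ := hθ
    have : cover n (adaLasso η) a b θ = F θ := by
      rw [cover_eq' hn hη ha hb θ]
      simp only [hFdef]
      rw [show Ucut η (θ + a) = Gp η (θ + a) by unfold Ucut; rw [if_pos (by linarith)],
        show Lcut η (θ - b) = Gp η (θ - b) by unfold Lcut; rw [if_pos (by linarith)]]
    rw [← this]
    exact ciInf_le (cover_bddBelow n _ a b) θ
  rw [← hFb]
  have htendsto : Tendsto F (𝓝[>] b) (𝓝 (F b)) :=
    (hFcont.continuousAt).tendsto.mono_left nhdsWithin_le_nhds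
  exact ge_of_tendsto htendsto (by filter_upwards [self_mem_nhdsWithin] using hev)

include hn hη in
lemma inf_le_g2 {a b : ℝ} (ha : 0 ≤ a) (hb : 0 ≤ b) :
    (⨅ θ : ℝ, cover n (adaLasso η) a b θ)
      ≤ stdNormCDF (Real.sqrt n * (a - η)) - stdNormCDF (Real.sqrt n * (a - Gp η (a+b))) := by
  have hc := sqrtn_pos hn hη
  set c := Real.sqrt (n:ℝ) with hcdef
  set F := fun θ : ℝ => stdNormCDF (c * (Gm η (θ+a) - θ)) - stdNormCDF (c * (Gm η (θ-b) - θ))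
    with hFdef
  have hFcont : Continuous F := by
    apply Continuous.sub
    · exact Phi_cont.comp (continuous_const.mul
        ((Gm_cont.comp (continuous_id.add continuous_const)).sub continuous_id))
    · exact Phi_cont.comp (continuous_const.mul
        ((Gm_cont.comp (continuous_id.sub continuous_const)).sub continuous_id))
  have hFb : F (-a) = stdNormCDF (c * (a - η)) - stdNormCDF (c * (a - Gp η (a+b))) := by
    simp only [hFdef]
    rw [show -a + a = (0:ℝ) by ring, Gm_zero hη, show -a - b = -(a+b) by ring,
      Gm_eq_neg_Gp]
    rw [neg_neg]
    congr 2 <;> ring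
  have hev : ∀ θ ∈ Iio (-a), (⨅ θ : ℝ, cover n (adaLasso η) a b θ) ≤ F θ := by
    intro θ hθ
    have hθa : θ < -a := hθ
    have : cover n (adaLasso η) a b θ = F θ := by
      rw [cover_eq' hn hη ha hb θ]
      simp only [hFdef]
      rw [show Ucut η (θ + a) = Gm η (θ + a) by unfold Ucut; rw [if_neg (by linarith)],
        show Lcut η (θ - b) = Gm η (θ - b) by unfold Lcut; rw [if_neg (by linarith)]]
    rw [← this]
    exact ciInf_le (cover_bddBelow n _ a b) θ
  rw [← hFb]
  have htendsto : Tendsto F (𝓝[<] (-a)) (𝓝 (F (-a))) :=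
    (hFcont.continuousAt).tendsto.mono_left nhdsWithin_le_nhds
  exact ge_of_tendsto htendsto (by filter_upwards [self_mem_nhdsWithin] using hev)

end main

/-! assembly -/

section asm
variable {n : ℕ} (hn : 1 ≤ n) {η : ℝ} (hη : 0 < η)

include hn hη in
lemma inf_le_form_low {a b : ℝ} (ha : 0 ≤ a) (hb : 0 ≤ b) :
    (⨅ θ : ℝ, cover n (adaLasso η) a b θ)
      ≤ stdNormCDF (Real.sqrt n * (Real.sqrt (((a+b)/2)^2+η^2) + ((a+b)/2 - a)))
        - stdNormCDF (Real.sqrt n * (η - a)) := by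
  have h2 := inf_le_g2 hn hη ha hb
  have e : stdNormCDF (Real.sqrt n * (a - η)) - stdNormCDF (Real.sqrt n * (a - Gp η (a+b)))
      = stdNormCDF (Real.sqrt n * (Real.sqrt (((a+b)/2)^2+η^2) + ((a+b)/2 - a)))
        - stdNormCDF (Real.sqrt n * (η - a)) := by
    rw [show Real.sqrt n * (a - η) = -(Real.sqrt n * (η - a)) by ring, Phi_neg,
      show Real.sqrt n * (a - Gp η (a+b))
        = -(Real.sqrt n * (Real.sqrt (((a+b)/2)^2+η^2) + ((a+b)/2 - a))) by
          rw [Gp_half]; ring, Phi_neg]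
    ring
  linarith [h2, e.le, e.ge]

include hn hη in
lemma inf_le_form_high {a b : ℝ} (ha : 0 ≤ a) (hb : 0 ≤ b) :
    (⨅ θ : ℝ, cover n (adaLasso η) a b θ)
      ≤ stdNormCDF (Real.sqrt n * (Real.sqrt (((a+b)/2)^2+η^2) + ((a+b)/2 - b)))
        - stdNormCDF (Real.sqrt n * (η - b)) := by
  have h1 := inf_le_g1 hn hη ha hb
  have e : Gp η (a+b) - b = Real.sqrt (((a+b)/2)^2+η^2) + ((a+b)/2 - b) := by
    rw [Gp_half]; ring
  rw [e] at h1
  exact h1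

theorem stmt_8' (n : ℕ) (hn : 1 ≤ n) (η : ℝ) (hη : 0 < η) (δ : ℝ) (hδ0 : 0 < δ)
    (hδ1 : δ < 1) :
    ∃ astar : ℝ, 0 ≤ astar ∧
      stdNormCDF (Real.sqrt n * (astar - η)) -
        stdNormCDF (-(Real.sqrt n * Real.sqrt (astar ^ 2 + η ^ 2))) = δ ∧
      (∀ a : ℝ, 0 ≤ a →
        stdNormCDF (Real.sqrt n * (a - η)) -
          stdNormCDF (-(Real.sqrt n * Real.sqrt (a ^ 2 + η ^ 2))) = δ →
        a = astar) ∧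
      0 < astar ∧
      (⨅ θ : ℝ, cover n (adaLasso η) astar astar θ) = δ ∧
      (∀ a b : ℝ, 0 ≤ a → 0 ≤ b →
        δ ≤ (⨅ θ : ℝ, cover n (adaLasso η) a b θ) →
        astar + astar ≤ a + b) ∧
      (∀ a b : ℝ, 0 ≤ a → 0 ≤ b →
        δ ≤ (⨅ θ : ℝ, cover n (adaLasso η) a b θ) →
        a + b = astar + astar → a = astar ∧ b = astar) := by
  obtain ⟨astar, hpos, hfa, huniq⟩ := astar_exists hn hη hδ0 hδ1
  have hc := sqrtn_pos hn hη
  have hinf_eq : (⨅ θ : ℝ, cover n (adaLasso η) astar astar θ) = δ := by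
    apply le_antisymm
    · have h1 := inf_le_g1 hn hη hpos.le hpos.le (a := astar) (b := astar)
      have e : Gp η (astar+astar) - astar = Real.sqrt (astar^2 + η^2) := by
        rw [show astar + astar = 2*astar by ring, Gp_eq, dfun_two astar]; ring
      rw [e] at h1
      rw [← fstar_eq hn hη] at h1
      rw [hfa] at h1
      exact h1
    · rw [← hfa]
      exact le_ciInf (fun θ => cover_ge hn hη hpos θ)
  -- the key bound: δ ≤ inf implies δ ≤ fstar((a+b)/2), strict version under a ≠ b
  have hkey : ∀ a b : ℝ, 0 ≤ a → 0 ≤ b →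
      δ ≤ (⨅ θ : ℝ, cover n (adaLasso η) a b θ) → δ ≤ fstar n η ((a+b)/2) := by
    intro a b ha hb hδle
    rcases le_total a b with hab | hab
    · have h2 := inf_le_form_low hn hη ha hb
      have h3 := keyLe hn hη ha (show a ≤ (a+b)/2 by linarith)
      linarith
    · have h2 := inf_le_form_high hn hη ha hb
      have h3 := keyLe hn hη hb (show b ≤ (a+b)/2 by linarith)
      linarith
  have hkey_strict : ∀ a b : ℝ, 0 ≤ a → 0 ≤ b → a ≠ b →
      δ ≤ (⨅ θ : ℝ, cover n (adaLasso η) a b θ) → δ < fstar n η ((a+b)/2) := by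
    intro a b ha hb hne hδle
    rcases lt_or_gt_of_ne hne with hab | hab
    · have h2 := inf_le_form_low hn hη ha hb
      have h3 := keyLt hn hη ha (show a < (a+b)/2 by linarith)
      linarith
    · have h2 := inf_le_form_high hn hη ha hb
      have h3 := keyLt hn hη hb (show b < (a+b)/2 by linarith)
      linarith
  refine ⟨astar, hpos.le, hfa, fun a ha heq => huniq a ha heq, hpos, hinf_eq, ?_, ?_⟩
  · intro a b ha hb hδle
    have hδm := hkey a b ha hb hδle
    by_contra hlt
    push_neg at hlt
    have hmlt : (a+b)/2 < astar := by linarith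
    have := fstar_strictMonoOn hn hη (show (a+b)/2 ∈ Ici (0:ℝ) by simp; linarith)
      (show astar ∈ Ici (0:ℝ) by simp [hpos.le]) hmlt
    rw [hfa] at this
    linarith
  · intro a b ha hb hδle hsum
    have hmeq : (a+b)/2 = astar := by linarith
    by_cases hne : a = b
    · rw [hne] at hsum
      constructor <;> [rw [hne]; skip] <;> linarith
    · exfalso
      have := hkey_strict a b ha hb hne hδle
      rw [hmeq, hfa] at this
      linarith

end asm

/-- Theorem 1(c): the shortest δ-level interval based on the adaptive LASSO estimator. -/
theorem stmt_8 (n : ℕ) (hn : 1 ≤ n) (η : ℝ) (hη : 0 < η) (δ : ℝ) (hδ0 : 0 < δ)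
    (hδ1 : δ < 1) :
    ∃ astar : ℝ, 0 ≤ astar ∧
      -- `astar` solves the equation
      stdNormCDF (Real.sqrt n * (astar - η)) -
        stdNormCDF (-(Real.sqrt n * Real.sqrt (astar ^ 2 + η ^ 2))) = δ ∧
      -- and it is the unique nonnegative solution
      (∀ a : ℝ, 0 ≤ a →
        stdNormCDF (Real.sqrt n * (a - η)) -
          stdNormCDF (-(Real.sqrt n * Real.sqrt (a ^ 2 + η ^ 2))) = δ →
        a = astar) ∧
      -- it is positive
      0 < astar ∧
      -- the corresponding symmetric interval has infimal coverage probability exactly δ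
      (⨅ θ : ℝ, cover n (adaLasso η) astar astar θ) = δ ∧
      -- among all intervals with infimal coverage probability ≥ δ,
      -- the length is minimized at (astar, astar) ...
      (∀ a b : ℝ, 0 ≤ a → 0 ≤ b →
        δ ≤ (⨅ θ : ℝ, cover n (adaLasso η) a b θ) →
        astar + astar ≤ a + b) ∧
      -- ... and uniquely so
      (∀ a b : ℝ, 0 ≤ a → 0 ≤ b →
        δ ≤ (⨅ θ : ℝ, cover n (adaLasso η) a b θ) →
        a + b = astar + astar → a = astar ∧ b = astar) := by
  exact stmt_8' n hn η hη δ hδ0 hδ1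
end

section
/- Suppose η_n > 0 is a sequence with η_n → 0 and n^{1/2} η_n → ∞, let θ̂ be any one of the estimators θ̂_S(η_n), θ̂_H(η_n), θ̂_A(η_n), let d be a real number, and define D_n = [θ̂ − d η_n, θ̂ + d η_n]. If d > 1, then lim_{n→∞} inf_{θ∈ℝ} P_{n,θ}(θ ∈ D_n) = 1; if d < 1, then lim_{n→∞} inf_{θ∈ℝ} P_{n,θ}(θ ∈ D_n) = 0. -/
open MeasureTheory ProbabilityTheory Filter
open scoped NNReal

noncomputable def gprob (s : ℝ) : ℝ := ((gaussianReal 0 1) (Set.Icc (-s) s)).toReal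

lemma gauss_decomp (n : ℕ) (hn : 1 ≤ n) (θ : ℝ) :
    gaussianReal θ ((n : ℝ≥0))⁻¹
      = Measure.map (fun x : ℝ => ((Real.sqrt n)⁻¹) * x + θ) (gaussianReal 0 1) := by
  have hs : (0:ℝ) < Real.sqrt n := Real.sqrt_pos.2 (by exact_mod_cast Nat.pos_of_ne_zero (by omega))
  set c : ℝ := (Real.sqrt n)⁻¹ with hc
  have hv : (NNReal.mk (c^2) (sq_nonneg c) * 1 : ℝ≥0) = ((n : ℝ≥0))⁻¹ := by
    ext
    push_cast
    rw [mul_one]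
    show c^2 = ((n:ℝ≥0):ℝ)⁻¹
    rw [hc]
    rw [← Real.sqrt_inv]
    rw [Real.sq_sqrt (by positivity)]
    norm_num
  have h1 : Measure.map (fun x : ℝ => c * x) (gaussianReal 0 1) = gaussianReal 0 ((n : ℝ≥0))⁻¹ := by
    rw [gaussianReal_map_const_mul c, mul_zero, hv]
  have h2 : Measure.map (fun y : ℝ => y + θ) (gaussianReal 0 ((n : ℝ≥0))⁻¹)
      = gaussianReal θ ((n : ℝ≥0))⁻¹ := by
    rw [gaussianReal_map_add_const θ, zero_add]
  rw [← h2, ← h1, Measure.map_map (measurable_id'.add_const θ) (measurable_const_mul c)]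
  rfl

lemma good_eq (n : ℕ) (hn : 1 ≤ n) (θ r : ℝ) :
    ((gaussianReal θ ((n : ℝ≥0))⁻¹) {y : ℝ | |y - θ| ≤ r}).toReal
      = gprob (Real.sqrt n * r) := by
  have hs : (0:ℝ) < Real.sqrt n := Real.sqrt_pos.2 (by exact_mod_cast Nat.pos_of_ne_zero (by omega))
  have hmeas : MeasurableSet {y : ℝ | |y - θ| ≤ r} :=
    (measurable_id.sub_const θ).abs measurableSet_Iic
  have hset : (fun x : ℝ => ((Real.sqrt n)⁻¹) * x + θ) ⁻¹' {y : ℝ | |y - θ| ≤ r}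
      = Set.Icc (-(Real.sqrt n * r)) (Real.sqrt n * r) := by
    ext x
    simp only [Set.mem_preimage, Set.mem_setOf_eq, Set.mem_Icc, add_sub_cancel_right]
    rw [abs_mul, abs_of_pos (inv_pos.2 hs), inv_mul_le_iff₀ hs, abs_le]
  rw [gauss_decomp n hn θ, Measure.map_apply (by fun_prop) hmeas, hset]
  rfl

lemma tail_eq (n : ℕ) (hn : 1 ≤ n) (θ r : ℝ) :
    ((gaussianReal θ ((n : ℝ≥0))⁻¹) {y : ℝ | r < |y - θ|}).toReal
      = 1 - gprob (Real.sqrt n * r) := by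
  have hmeas : MeasurableSet {y : ℝ | |y - θ| ≤ r} := by
    have : {y : ℝ | |y - θ| ≤ r} = (fun y => |y - θ|) ⁻¹' (Set.Iic r) := rfl
    rw [this]; exact (measurable_id.sub_const θ).abs measurableSet_Iic
  have hcompl : {y : ℝ | r < |y - θ|} = {y : ℝ | |y - θ| ≤ r}ᶜ := by
    ext y; simp [not_le]
  rw [hcompl, measure_compl hmeas (measure_ne_top _ _), ← good_eq n hn θ r]
  rw [measure_univ]
  rw [ENNReal.toReal_sub_of_le (prob_le_one) (by simp)]
  simp

lemma gprob_tendsto {s : ℕ → ℝ} (hs : Tendsto s atTop atTop) :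
    Tendsto (fun n => gprob (s n)) atTop (nhds 1) := by
  have hmono : Monotone (fun t : ℝ => Set.Icc (-t) t) := fun a b hab =>
    Set.Icc_subset_Icc (by linarith) hab
  have hU : (⋃ t : ℝ, Set.Icc (-t) t) = Set.univ := by
    ext x; simp only [Set.mem_iUnion, Set.mem_Icc, Set.mem_univ, iff_true]
    exact ⟨|x|, neg_abs_le x, le_abs_self x⟩
  have h1 : Tendsto (fun t : ℝ => (gaussianReal 0 1) (Set.Icc (-t) t)) atTop
      (nhds ((gaussianReal 0 1) Set.univ)) := by
    have := tendsto_measure_iUnion_atTop (μ := gaussianReal 0 1) hmono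
    rwa [hU] at this
  rw [measure_univ] at h1
  have h2 : Tendsto (fun t : ℝ => gprob t) atTop (nhds 1) := by
    have := (ENNReal.tendsto_toReal (by norm_num : (1:ENNReal) ≠ ⊤)).comp h1
    simpa [gprob, Function.comp_def] using this
  exact h2.comp hs

lemma est_dist {η : ℝ} (hη : 0 < η) (est : ℝ → ℝ → ℝ)
    (hest : est = softThresh ∨ est = hardThresh ∨ est = adaLasso) (y : ℝ) :
    |est η y - y| ≤ η := by
  rcases hest with rfl | rfl | rfl
  · unfold softThresh
    rcases lt_trichotomy y 0 with hy | rfl | hy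
    · rw [Real.sign_of_neg hy]
      rw [abs_of_neg hy]
      rcases le_or_gt (-y - η) 0 with h | h
      · rw [max_eq_right h]; simp; rw [abs_of_nonpos hy.le]; linarith
      · rw [max_eq_left h.le]; rw [abs_le]; constructor <;> nlinarith
    · simp [hη.le, abs_of_nonneg hη.le]
    · rw [Real.sign_of_pos hy, abs_of_pos hy, one_mul]
      rcases le_or_gt (y - η) 0 with h | h
      · rw [max_eq_right h]; simp; rw [abs_of_nonneg hy.le]; linarith
      · rw [max_eq_left h.le]; rw [abs_le]; constructor <;> linarith
  · unfold hardThresh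
    split_ifs with h
    · simpa using hη.le
    · push_neg at h; rw [zero_sub, abs_neg]; exact h
  · unfold adaLasso
    split_ifs with h
    · rw [abs_sub_comm]; simpa using h
    · push_neg at h
      have hy : y ≠ 0 := by intro h0; rw [h0] at h; simp at h; linarith
      have : y - η ^ 2 / y - y = -(η^2/y) := by ring
      rw [this, abs_neg, abs_div, abs_pow]
      rw [div_le_iff₀ (lt_trans hη h), abs_of_pos hη]
      nlinarith

lemma cover_nonneg (n : ℕ) (est : ℝ → ℝ) (a b θ : ℝ) : 0 ≤ cover n est a b θ :=
  ENNReal.toReal_nonneg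

lemma cover_le_one (n : ℕ) (est : ℝ → ℝ) (a b θ : ℝ) : cover n est a b θ ≤ 1 := by
  have h := prob_le_one (μ := gaussianReal θ ((n : ℝ≥0))⁻¹)
    (s := {y : ℝ | est y - a ≤ θ ∧ θ ≤ est y + b})
  calc cover n est a b θ ≤ (1 : ENNReal).toReal := ENNReal.toReal_mono (by simp) h
  _ = 1 := by simp

lemma bdd (n : ℕ) (est : ℝ → ℝ) (a b : ℝ) :
    BddBelow (Set.range fun θ => cover n est a b θ) := by
  refine ⟨0, ?_⟩
  rintro x ⟨θ, rfl⟩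
  exact cover_nonneg _ _ _ _ _

lemma cover_ge_s12 (n : ℕ) (hn : 1 ≤ n) {η d : ℝ} (hη : 0 < η) (hd : 1 < d)
    (est : ℝ → ℝ → ℝ)
    (hest : est = softThresh ∨ est = hardThresh ∨ est = adaLasso) (θ : ℝ) :
    gprob (Real.sqrt n * ((d - 1) * η)) ≤ cover n (est η) (d * η) (d * η) θ := by
  rw [← good_eq n hn θ ((d - 1) * η)]
  apply ENNReal.toReal_mono (measure_ne_top _ _)
  apply measure_mono
  intro y hy
  simp only [Set.mem_setOf_eq] at hy ⊢
  have h1 := est_dist hη est hest y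
  have h2 := abs_sub_abs_le_abs_sub (est η y - θ) (y - θ)
  have h3 : |est η y - θ| ≤ d * η := by
    calc |est η y - θ| ≤ |est η y - y| + |y - θ| := by
          have := abs_sub_le (est η y) y θ; linarith
    _ ≤ η + (d - 1) * η := add_le_add h1 hy
    _ = d * η := by ring
  have := abs_le.1 h3
  constructor <;> linarith [this.1, this.2]

lemma cover_le_tail (n : ℕ) (hn : 1 ≤ n) (est : ℝ → ℝ) (a b θ r : ℝ)
    (h : {y : ℝ | est y - a ≤ θ ∧ θ ≤ est y + b} ⊆ {y : ℝ | r < |y - θ|}) :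
    cover n est a b θ ≤ 1 - gprob (Real.sqrt n * r) := by
  rw [← tail_eq n hn θ r]
  exact ENNReal.toReal_mono (measure_ne_top _ _) (measure_mono h)

lemma soft_incl {η d : ℝ} (hη : 0 < η) (hd0 : 0 ≤ d) (hd : d < 1) :
    {y : ℝ | softThresh η y - d * η ≤ 2 * η ∧ 2 * η ≤ softThresh η y + d * η}
      ⊆ {y : ℝ | (1 - d) / 2 * η < |y - 2 * η|} := by
  intro y hy
  simp only [Set.mem_setOf_eq] at hy ⊢
  by_contra hcon
  push_neg at hcon
  rw [abs_le] at hcon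
  set ε := (1 - d) / 2 with hε
  have hε1 : ε ≤ 1 / 2 := by rw [hε]; linarith
  have hεpos : 0 < ε := by rw [hε]; linarith
  have hy1 : (2 - ε) * η ≤ y := by nlinarith [hcon.1]
  have hy2 : y ≤ (2 + ε) * η := by nlinarith [hcon.2]
  have hypos : 0 < y := by nlinarith
  have hyη : 0 < y - η := by nlinarith
  have hsoft : softThresh η y = y - η := by
    unfold softThresh
    rw [Real.sign_of_pos hypos, abs_of_pos hypos, max_eq_left hyη.le, one_mul]
  rw [hsoft] at hy
  nlinarith [hy.2]

lemma hard_incl {η d : ℝ} (hη : 0 < η) (hd0 : 0 ≤ d) (hd : d < 1) :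
    {y : ℝ | hardThresh η y - d * η ≤ (1 + d) / 2 * η ∧
        (1 + d) / 2 * η ≤ hardThresh η y + d * η}
      ⊆ {y : ℝ | (1 - d) / 2 * η < |y - (1 + d) / 2 * η|} := by
  intro y hy
  simp only [Set.mem_setOf_eq] at hy ⊢
  by_contra hcon
  push_neg at hcon
  rw [abs_le] at hcon
  have hy1 : d * η ≤ y := by nlinarith [hcon.1]
  have hy2 : y ≤ η := by nlinarith [hcon.2]
  have habs : |y| ≤ η := by rw [abs_le]; constructor <;> nlinarith
  have hhard : hardThresh η y = 0 := by unfold hardThresh; rw [if_neg (not_lt.2 habs)]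
  rw [hhard] at hy
  nlinarith [hy.2]

lemma ada_incl {η d : ℝ} (hη : 0 < η) (hd0 : 0 ≤ d) (hd : d < 1) :
    {y : ℝ | adaLasso η y - d * η ≤ (1 + 2 * ((1 - d) / 8)) * η ∧
        (1 + 2 * ((1 - d) / 8)) * η ≤ adaLasso η y + d * η}
      ⊆ {y : ℝ | (1 - d) / 8 * η < |y - (1 + 2 * ((1 - d) / 8)) * η|} := by
  intro y hy
  simp only [Set.mem_setOf_eq] at hy ⊢
  by_contra hcon
  push_neg at hcon
  rw [abs_le] at hcon
  set ε := (1 - d) / 8 with hε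
  have hεpos : 0 < ε := by rw [hε]; linarith
  have hε1 : ε ≤ 1 / 8 := by rw [hε]; linarith
  have hy1 : (1 + ε) * η ≤ y := by nlinarith [hcon.1]
  have hy2 : y ≤ (1 + 3 * ε) * η := by nlinarith [hcon.2]
  have hypos : 0 < y := by nlinarith
  have hyη : η < y := by nlinarith
  have hyabs : ¬ (|y| ≤ η) := by rw [abs_of_pos hypos]; linarith
  have hada : adaLasso η y = y - η ^ 2 / y := by unfold adaLasso; rw [if_neg hyabs]
  rw [hada] at hy
  have hkey : y - η ^ 2 / y + d * η < (1 + 2 * ε) * η := by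
    have h2 : (y - η ^ 2 / y + d * η) * y = y ^ 2 - η ^ 2 + d * η * y := by
      field_simp
    have hd8 : d = 1 - 8 * ε := by rw [hε]; ring
    rw [← sub_pos]
    have : ((1 + 2 * ε) * η - (y - η ^ 2 / y + d * η)) * y
        = (1 + 2 * ε) * η * y - (y ^ 2 - η ^ 2 + d * η * y) := by field_simp
    have hgoal : 0 < ((1 + 2 * ε) * η - (y - η ^ 2 / y + d * η)) * y := by
      rw [this, hd8]
      nlinarith [mul_pos hεpos (mul_pos hη hypos)]
    nlinarith [hgoal]
  linarith [hy.2]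

/-- Proposition 4: in the sparse-tuning regime (`η_n → 0`, `√n η_n → ∞`), the interval
`D_n = [θ̂ - d η_n, θ̂ + d η_n]` based on soft-thresholding, hard-thresholding, or the
adaptive LASSO has infimal coverage probability converging to 1 if `d > 1` and to 0 if
`d < 1`. -/
theorem stmt_12 (η : ℕ → ℝ) (hη : ∀ n, 0 < η n)
    (hη0 : Tendsto η atTop (nhds 0))
    (hηsparse : Tendsto (fun n : ℕ => Real.sqrt n * η n) atTop atTop)
    (est : ℝ → ℝ → ℝ)
    (hest : est = softThresh ∨ est = hardThresh ∨ est = adaLasso)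
    (d : ℝ) :
    (1 < d →
      Tendsto (fun n : ℕ => ⨅ θ : ℝ, cover n (est (η n)) (d * η n) (d * η n) θ)
        atTop (nhds 1)) ∧
    (d < 1 →
      Tendsto (fun n : ℕ => ⨅ θ : ℝ, cover n (est (η n)) (d * η n) (d * η n) θ)
        atTop (nhds 0)) := by
  constructor
  · intro hd
    have hdpos : (0:ℝ) < d - 1 := by linarith
    have hlow : Tendsto (fun n : ℕ => gprob (Real.sqrt n * ((d - 1) * η n))) atTop (nhds 1) := by
      apply gprob_tendsto
      have heq : (fun n : ℕ => Real.sqrt n * ((d - 1) * η n))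
          = fun n : ℕ => (d - 1) * (Real.sqrt n * η n) := by funext n; ring
      rw [heq]
      exact hηsparse.const_mul_atTop hdpos
    apply tendsto_of_tendsto_of_tendsto_of_le_of_le' hlow tendsto_const_nhds
    · filter_upwards [eventually_ge_atTop 1] with n hn
      exact le_ciInf fun θ => cover_ge_s12 n hn (hη n) hd est hest θ
    · filter_upwards with n
      exact le_trans (ciInf_le (bdd _ _ _ _) 0) (cover_le_one _ _ _ _ _)
  · intro hd
    rcases lt_or_ge d 0 with hdneg | hd0
    · have hzero : ∀ n : ℕ, ∀ θ : ℝ, cover n (est (η n)) (d * η n) (d * η n) θ = 0 := by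
        intro n θ
        unfold cover
        have hempty : {y : ℝ | est (η n) y - d * η n ≤ θ ∧ θ ≤ est (η n) y + d * η n} = ∅ := by
          ext y
          simp only [Set.mem_setOf_eq, Set.mem_empty_iff_false, iff_false, not_and, not_le]
          intro h1
          nlinarith [mul_neg_of_neg_of_pos hdneg (hη n)]
        rw [hempty, measure_empty]
        simp
      simp only [hzero, ciInf_const]
      exact tendsto_const_nhds
    · have key : ∀ (c ε : ℝ), 0 < ε →
          (∀ n : ℕ, {y : ℝ | est (η n) y - d * η n ≤ c * η n ∧ c * η n ≤ est (η n) y + d * η n}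
            ⊆ {y : ℝ | ε * η n < |y - c * η n|}) →
          Tendsto (fun n : ℕ => ⨅ θ : ℝ, cover n (est (η n)) (d * η n) (d * η n) θ)
            atTop (nhds 0) := by
        intro c ε hε hincl
        have hup : Tendsto (fun n : ℕ => 1 - gprob (Real.sqrt n * (ε * η n))) atTop (nhds 0) := by
          have h1 : Tendsto (fun n : ℕ => gprob (Real.sqrt n * (ε * η n))) atTop (nhds 1) := by
            apply gprob_tendsto
            have heq : (fun n : ℕ => Real.sqrt n * (ε * η n))
                = fun n : ℕ => ε * (Real.sqrt n * η n) := by funext n; ring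
            rw [heq]
            exact hηsparse.const_mul_atTop hε
          have h2 := (tendsto_const_nhds (x := (1:ℝ)) (f := atTop (α := ℕ))).sub h1
          simpa using h2
        apply tendsto_of_tendsto_of_tendsto_of_le_of_le' tendsto_const_nhds hup
        · filter_upwards with n
          exact le_ciInf fun θ => cover_nonneg _ _ _ _ _
        · filter_upwards [eventually_ge_atTop 1] with n hn
          calc (⨅ θ : ℝ, cover n (est (η n)) (d * η n) (d * η n) θ)
              ≤ cover n (est (η n)) (d * η n) (d * η n) (c * η n) := ciInf_le (bdd _ _ _ _) _
            _ ≤ 1 - gprob (Real.sqrt n * (ε * η n)) :=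
                cover_le_tail n hn _ _ _ _ _ (hincl n)
      rcases hest with rfl | rfl | rfl
      · exact key 2 ((1 - d) / 2) (by linarith) fun n => by
          have h := soft_incl (hη n) hd0 hd
          intro y hy
          have := h (by simpa [mul_comm, mul_assoc, two_mul] using hy)
          simpa [mul_assoc] using this
      · exact key ((1 + d) / 2) ((1 - d) / 2) (by linarith) fun n => by
          have h := hard_incl (hη n) hd0 hd
          intro y hy
          have := h (by simpa [mul_assoc] using hy)
          simpa [mul_assoc] using this
      · exact key (1 + 2 * ((1 - d) / 8)) ((1 - d) / 8) (by linarith) fun n => by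
          have h := ada_incl (hη n) hd0 hd
          intro y hy
          have := h (by simpa [mul_assoc] using hy)
          simpa [mul_assoc] using this
end
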